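/- arXiv:1101.5975 — 2 statements merged into one kernel-verified Lean document; each statement's English description precedes it below -/
import Mathlib

section
/- For a smooth function G on ℝ² with G = k_0 + k_1 q¹ + k_2 q² where k_1 k_2 ≠ 0, the potential V(q¹,q²) = mL_0[(q¹ + k_0/(2k_1))² + (q² + k_0/(2k_2))²] + F(k_1 q² - k_2 q¹) satisfies the compatibility equation ∇V·∇G = 2mL_0 G (the case c = 0 of the compatibility condition), for any differentiable F : ℝ → ℝ. -/
/-- Partial derivative with respect to the first coordinate. -/
noncomputable def pd1 (f : ℝ × ℝ → ℝ) : ℝ × ℝ → ℝ :=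
  fun p => deriv (fun s => f (s, p.2)) p.1

/-- Partial derivative with respect to the second coordinate. -/
noncomputable def pd2 (f : ℝ × ℝ → ℝ) : ℝ × ℝ → ℝ :=
  fun p => deriv (fun s => f (p.1, s)) p.2

/-- In the flat case `c = 0`, with `G = k₀ + k₁q¹ + k₂q²`, `k₁k₂ ≠ 0`, the
potential `V = mL₀[(q¹ + k₀/(2k₁))² + (q² + k₀/(2k₂))²] + F(k₁q² - k₂q¹)`
satisfies the compatibility equation `∇V·∇G = 2mL₀G`. -/
theorem flat_potential_compatibility (m L₀ k₀ k₁ k₂ : ℝ) (hk : k₁ * k₂ ≠ 0)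
    (F : ℝ → ℝ) (hF : Differentiable ℝ F)
    (G V : ℝ × ℝ → ℝ)
    (hG : ∀ p : ℝ × ℝ, G p = k₀ + k₁ * p.1 + k₂ * p.2)
    (hV : ∀ p : ℝ × ℝ, V p =
      m * L₀ * ((p.1 + k₀ / (2 * k₁)) ^ 2 + (p.2 + k₀ / (2 * k₂)) ^ 2)
        + F (k₁ * p.2 - k₂ * p.1)) :
    ∀ p : ℝ × ℝ, pd1 V p * pd1 G p + pd2 V p * pd2 G p = 2 * m * L₀ * G p := by
  have hk₁ : k₁ ≠ 0 := fun h => hk (by simp [h])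
  have hk₂ : k₂ ≠ 0 := fun h => hk (by simp [h])
  intro p
  have hG1 : pd1 G p = k₁ := by
    have : (fun s => G (s, p.2)) = fun s => k₀ + k₁ * s + k₂ * p.2 := by
      funext s; exact hG (s, p.2)
    have h : HasDerivAt (fun s : ℝ => k₀ + k₁ * s + k₂ * p.2) k₁ p.1 := by
      simpa using ((((hasDerivAt_id p.1).const_mul k₁).const_add k₀).add_const (k₂ * p.2))
    rw [pd1, this]; exact h.deriv
  have hG2 : pd2 G p = k₂ := by
    have : (fun s => G (p.1, s)) = fun s => k₀ + k₁ * p.1 + k₂ * s := by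
      funext s; exact hG (p.1, s)
    have h : HasDerivAt (fun s : ℝ => k₀ + k₁ * p.1 + k₂ * s) k₂ p.2 := by
      simpa using (((hasDerivAt_id p.2).const_mul k₂).const_add (k₀ + k₁ * p.1))
    rw [pd2, this]; exact h.deriv
  have hV1 : pd1 V p =
      m * L₀ * (2 * (p.1 + k₀ / (2 * k₁))) +
        deriv F (k₁ * p.2 - k₂ * p.1) * (-k₂) := by
    have hfun : (fun s => V (s, p.2)) = fun s =>
        m * L₀ * ((s + k₀ / (2 * k₁)) ^ 2 + (p.2 + k₀ / (2 * k₂)) ^ 2)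
          + F (k₁ * p.2 - k₂ * s) := by
      funext s; exact hV (s, p.2)
    have h1 : HasDerivAt (fun s : ℝ =>
        m * L₀ * ((s + k₀ / (2 * k₁)) ^ 2 + (p.2 + k₀ / (2 * k₂)) ^ 2))
        (m * L₀ * (2 * (p.1 + k₀ / (2 * k₁)))) p.1 := by
      have : HasDerivAt (fun s : ℝ => (s + k₀ / (2 * k₁)) ^ 2)
          (2 * (p.1 + k₀ / (2 * k₁))) p.1 := by
        have := ((hasDerivAt_id p.1).add_const (k₀ / (2 * k₁))).pow 2
        simp at this; exact this
      simpa using ((this.add_const ((p.2 + k₀ / (2 * k₂)) ^ 2)).const_mul (m * L₀))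
    have h2 : HasDerivAt (fun s : ℝ => F (k₁ * p.2 - k₂ * s))
        (deriv F (k₁ * p.2 - k₂ * p.1) * (-k₂)) p.1 := by
      have hin : HasDerivAt (fun s : ℝ => k₁ * p.2 - k₂ * s) (-k₂) p.1 := by
        simpa using ((hasDerivAt_id p.1).const_mul k₂).const_sub (k₁ * p.2)
      exact (hF.differentiableAt.hasDerivAt.comp p.1 hin)
    rw [pd1, hfun]
    exact (h1.add h2).deriv
  have hV2 : pd2 V p =
      m * L₀ * (2 * (p.2 + k₀ / (2 * k₂))) +
        deriv F (k₁ * p.2 - k₂ * p.1) * k₁ := by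
    have hfun : (fun s => V (p.1, s)) = fun s =>
        m * L₀ * ((p.1 + k₀ / (2 * k₁)) ^ 2 + (s + k₀ / (2 * k₂)) ^ 2)
          + F (k₁ * s - k₂ * p.1) := by
      funext s; exact hV (p.1, s)
    have h1 : HasDerivAt (fun s : ℝ =>
        m * L₀ * ((p.1 + k₀ / (2 * k₁)) ^ 2 + (s + k₀ / (2 * k₂)) ^ 2))
        (m * L₀ * (2 * (p.2 + k₀ / (2 * k₂)))) p.2 := by
      have : HasDerivAt (fun s : ℝ => (s + k₀ / (2 * k₂)) ^ 2)
          (2 * (p.2 + k₀ / (2 * k₂))) p.2 := by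
        have := ((hasDerivAt_id p.2).add_const (k₀ / (2 * k₂))).pow 2
        simp at this; exact this
      simpa using ((this.const_add ((p.1 + k₀ / (2 * k₁)) ^ 2)).const_mul (m * L₀))
    have h2 : HasDerivAt (fun s : ℝ => F (k₁ * s - k₂ * p.1))
        (deriv F (k₁ * p.2 - k₂ * p.1) * k₁) p.2 := by
      have hin : HasDerivAt (fun s : ℝ => k₁ * s - k₂ * p.1) k₁ p.2 := by
        simpa using (((hasDerivAt_id p.2).const_mul k₁).sub_const (k₂ * p.1))
      exact (hF.differentiableAt.hasDerivAt.comp p.2 hin)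
    rw [pd2, hfun]
    exact (h1.add h2).deriv
  rw [hG1, hG2, hV1, hV2, hG p]
  field_simp
  ring
end

section
/- On the pseudosphere with metric dη² + cosh²η dξ², with G = a₁(e^{-η} − e^{η}) = −2a₁ sinh η and V = F(ξ)/cosh²η for any differentiable F, the compatibility equation ∂_ηV ∂_ηG + (1/cosh²η) ∂_ξV ∂_ξG = −2VG holds (case mc = −1, L₀ = 0). -/
/-- On the pseudosphere with metric `dη² + cosh²η dξ²`, with
`G = a₁(e^{-η} - e^{η}) = -2a₁ sinh η` and `V = F(ξ)/cosh²η`, the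
compatibility equation `∂_ηV ∂_ηG + (1/cosh²η) ∂_ξV ∂_ξG = -2VG` holds
(case `mc = -1`, `L₀ = 0`). -/
theorem pseudosphere_potential_compatibility (a₁ : ℝ)
    (F : ℝ → ℝ) (hF : Differentiable ℝ F)
    (G V : ℝ × ℝ → ℝ)
    (hG : ∀ p : ℝ × ℝ, G p = a₁ * (Real.exp (-p.1) - Real.exp p.1))
    (hV : ∀ p : ℝ × ℝ, V p = F p.2 / (Real.cosh p.1) ^ 2) :
    ∀ p : ℝ × ℝ,
      pd1 V p * pd1 G p + (1 / (Real.cosh p.1) ^ 2) * pd2 V p * pd2 G p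
        = -2 * V p * G p := by
  intro p
  obtain ⟨x, y⟩ := p
  have hc : Real.cosh x ≠ 0 := ne_of_gt (Real.cosh_pos x)
  have hc2 : (Real.cosh x) ^ 2 ≠ 0 := pow_ne_zero _ hc
  have hcd : HasDerivAt (fun s => Real.cosh s ^ 2) (2 * Real.cosh x * Real.sinh x) x := by
    have := (Real.hasDerivAt_cosh x).pow 2
    exact this.congr_deriv (by show ((2:ℕ):ℝ) * Real.cosh x ^ 1 * Real.sinh x = _; push_cast; ring)
  have h1 : pd1 V (x, y) = F y * -(2 * Real.cosh x * Real.sinh x) / ((Real.cosh x ^ 2) ^ 2) := by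
    have heq : (fun s => V (s, y)) = fun s => F y / Real.cosh s ^ 2 := by
      funext s; rw [hV]
    have hd : HasDerivAt (fun s => F y / Real.cosh s ^ 2)
        ((0 * (Real.cosh x ^ 2) - F y * (2 * Real.cosh x * Real.sinh x)) / (Real.cosh x ^ 2) ^ 2) x :=
      (hasDerivAt_const x (F y)).div hcd hc2
    rw [pd1]; simp only [heq, hd.deriv]; ring
  have h2 : pd1 G (x, y) = a₁ * (-Real.exp (-x) - Real.exp x) := by
    have heq : (fun s => G (s, y)) = fun s => a₁ * (Real.exp (-s) - Real.exp s) := by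
      funext s; rw [hG]
    have hexm : HasDerivAt (fun s : ℝ => Real.exp (-s)) (-Real.exp (-x)) x := by
      exact ((Real.hasDerivAt_exp (-x)).comp x (hasDerivAt_neg x)).congr_deriv (by ring)
    have hd : HasDerivAt (fun s => a₁ * (Real.exp (-s) - Real.exp s))
        (a₁ * (-Real.exp (-x) - Real.exp x)) x :=
      (hexm.sub (Real.hasDerivAt_exp x)).const_mul a₁
    rw [pd1]; simp only [heq, hd.deriv]
  have h3 : pd2 G (x, y) = 0 := by
    have : (fun s => G (x, s)) = fun _ => a₁ * (Real.exp (-x) - Real.exp x) := by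
      funext s; rw [hG]
    rw [pd2]; simp only [this]; simp
  simp only [h1, h2, h3, hV, hG, mul_zero, add_zero]
  have hcosh : Real.cosh x = (Real.exp x + Real.exp (-x)) / 2 := Real.cosh_eq x
  have hsinh : Real.sinh x = (Real.exp x - Real.exp (-x)) / 2 := Real.sinh_eq x
  rw [hcosh, hsinh]
  have he : Real.exp x * Real.exp (-x) = 1 := by
    rw [← Real.exp_add]; simp
  field_simp
  nlinarith [Real.exp_pos x, Real.exp_pos (-x), he, sq_nonneg (Real.exp x + Real.exp (-x))]
end
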